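/- arXiv:2012.01156 — 4 statements merged into one kernel-verified Lean document; each statement's English description precedes it below -/
import Mathlib

section
/- Let S be a symmetric n\times n real matrix with zero diagonal and \beta > 0. For every \epsilon > 0 there exists \alpha_1 > 0 such that for all \alpha > \alpha_1, every critical point x of U(x) = \sum_i x_i^4/4 + ((\beta - \alpha^2)/2)|x|^2 - (1/2) x^T S x satisfies |x|/\alpha^2 < \epsilon. -/
/-- A priori estimate: for every `ε > 0` there is `α₁ > 0` such that for all `α > α₁`,
every critical point `x` of `U(x) = ∑ xᵢ⁴/4 + ((β-α²)/2)|x|² - (1/2)xᵀSx`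
satisfies `|x|/α² < ε`. -/
theorem critical_points_apriori_estimate (n : ℕ) (S : Matrix (Fin n) (Fin n) ℝ)
    (hS : S.IsSymm) (hSd : ∀ i, S i i = 0) (β : ℝ) (hβ : 0 < β) :
    ∀ ε > (0 : ℝ), ∃ α₁ > (0 : ℝ), ∀ α > α₁, ∀ x : Fin n → ℝ,
      (∀ i, (x i) ^ 3 + (β - α ^ 2) * x i - ∑ j, S i j * x j = 0) →
      Real.sqrt (∑ i, (x i) ^ 2) / α ^ 2 < ε := by
  intro ε hε
  set C : ℝ := ∑ i, ∑ j, |S i j| with hCdef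
  have hC0 : 0 ≤ C := Finset.sum_nonneg fun i _ => Finset.sum_nonneg fun j _ => abs_nonneg _
  set K : ℝ := Real.sqrt (n * (1 + C)) with hKdef
  have hK0 : 0 ≤ K := Real.sqrt_nonneg _
  refine ⟨1 + Real.sqrt β + K / ε, by positivity, ?_⟩
  intro α hα x hx
  have hsqβ : 0 ≤ Real.sqrt β := Real.sqrt_nonneg _
  have hKε : 0 ≤ K / ε := by positivity
  have hα1 : 1 < α := by linarith
  have hα0 : 0 < α := by linarith
  have hαβ : β ≤ α ^ 2 := by
    have h1 : Real.sqrt β < α := by linarith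
    nlinarith [Real.sq_sqrt hβ.le]
  have key : ∑ i, x i ^ 2 ≤ (n * (1 + C)) * α ^ 2 := by
    rcases Nat.eq_zero_or_pos n with h0 | hn
    · subst h0; simp
    · obtain ⟨i₀, -, hi₀⟩ := Finset.exists_max_image Finset.univ (fun i => |x i|)
        ⟨⟨0, hn⟩, Finset.mem_univ _⟩
      set M := |x i₀| with hMdef
      have hM0 : 0 ≤ M := abs_nonneg _
      have hMle : ∀ j, |x j| ≤ M := fun j => hi₀ j (Finset.mem_univ j)
      have hrow : ∑ j, |S i₀ j| ≤ C :=
        Finset.single_le_sum (f := fun i => ∑ j, |S i j|)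
          (fun i _ => Finset.sum_nonneg fun j _ => abs_nonneg _) (Finset.mem_univ i₀)
      have hcube : M ^ 3 ≤ (α ^ 2 - β + C) * M := by
        have h := hx i₀
        have hx3 : x i₀ ^ 3 = (α ^ 2 - β) * x i₀ + ∑ j, S i₀ j * x j := by linarith
        have h1 : M ^ 3 = |x i₀ ^ 3| := by rw [abs_pow]
        have h2 : |∑ j, S i₀ j * x j| ≤ C * M := by
          calc |∑ j, S i₀ j * x j| ≤ ∑ j, |S i₀ j * x j| := Finset.abs_sum_le_sum_abs _ _
            _ ≤ ∑ j, |S i₀ j| * M := by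
                refine Finset.sum_le_sum fun j _ => ?_
                rw [abs_mul]
                exact mul_le_mul_of_nonneg_left (hMle j) (abs_nonneg _)
            _ = (∑ j, |S i₀ j|) * M := by rw [Finset.sum_mul]
            _ ≤ C * M := mul_le_mul_of_nonneg_right hrow hM0
        calc M ^ 3 = |x i₀ ^ 3| := h1
          _ = |(α ^ 2 - β) * x i₀ + ∑ j, S i₀ j * x j| := by rw [hx3]
          _ ≤ |(α ^ 2 - β) * x i₀| + |∑ j, S i₀ j * x j| := abs_add_le _ _
          _ ≤ (α ^ 2 - β) * M + C * M := by
              refine add_le_add ?_ h2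
              rw [abs_mul, abs_of_nonneg (by linarith : (0:ℝ) ≤ α ^ 2 - β)]
          _ = (α ^ 2 - β + C) * M := by ring
      have hM2 : M ^ 2 ≤ (1 + C) * α ^ 2 := by
        rcases eq_or_lt_of_le hM0 with h | h
        · nlinarith
        · have h1 : M ^ 2 ≤ α ^ 2 - β + C := by nlinarith
          have h2 : C * 1 ≤ C * α ^ 2 :=
            mul_le_mul_of_nonneg_left (by nlinarith : (1:ℝ) ≤ α ^ 2) hC0
          nlinarith
      calc ∑ i, x i ^ 2 ≤ ∑ _i : Fin n, (1 + C) * α ^ 2 := by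
            refine Finset.sum_le_sum fun j _ => ?_
            calc x j ^ 2 = |x j| ^ 2 := (sq_abs _).symm
              _ ≤ M ^ 2 := by nlinarith [hMle j, abs_nonneg (x j)]
              _ ≤ (1 + C) * α ^ 2 := hM2
        _ = (n * (1 + C)) * α ^ 2 := by
            rw [Finset.sum_const, Finset.card_univ, Fintype.card_fin]; ring
  have hsqrt : Real.sqrt (∑ i, x i ^ 2) ≤ K * α := by
    rw [hKdef]
    calc Real.sqrt (∑ i, x i ^ 2) ≤ Real.sqrt ((n * (1 + C)) * α ^ 2) :=
          Real.sqrt_le_sqrt key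
      _ = Real.sqrt (n * (1 + C)) * α := by
          rw [Real.sqrt_mul (by positivity), Real.sqrt_sq hα0.le]
  have hKα : K < ε * α := by
    have : K / ε < α := by linarith
    calc K = ε * (K / ε) := by field_simp
      _ < ε * α := by exact mul_lt_mul_of_pos_left this hε
  rw [div_lt_iff₀ (by positivity)]
  calc Real.sqrt (∑ i, x i ^ 2) ≤ K * α := hsqrt
    _ < (ε * α) * α := by exact mul_lt_mul_of_pos_right hKα hα0
    _ = ε * α ^ 2 := by ring
end

section
/- Let \beta > 1 and \alpha^2 > \beta + 2. The function U(x_1,x_2) = (x_1^4 + x_2^4)/4 + ((\beta - \alpha^2)/2)(x_1^2 + x_2^2) - x_1 x_2 has exactly 9 critical points, of which exactly 4 are local minima: (\lambda_1,\lambda_1), (-\lambda_1,-\lambda_1), (\lambda_2,-\lambda_2), (-\lambda_2,\lambda_2), where \lambda_1 = \sqrt{\alpha^2 - \beta + 1} and \lambda_2 = \sqrt{\alpha^2 - \beta - 1}. -/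
set_option maxHeartbeats 2000000

section helpers

lemma isLocalMin_of_ball {U : ℝ × ℝ → ℝ} {p : ℝ × ℝ} (ε : ℝ) (hε : 0 < ε)
    (h : ∀ q : ℝ × ℝ, dist q p < ε → U p ≤ U q) : IsLocalMin U p := by
  rw [IsLocalMin, IsMinFilter, Metric.eventually_nhds_iff]
  exact ⟨ε, hε, fun q hq => h q hq⟩

lemma not_isLocalMin_pt {U : ℝ × ℝ → ℝ} {p : ℝ × ℝ}
    (h : ∀ ε > (0:ℝ), ∃ q : ℝ × ℝ, dist q p < ε ∧ U q < U p) : ¬ IsLocalMin U p := by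
  intro hmin
  rw [IsLocalMin, IsMinFilter, Metric.eventually_nhds_iff] at hmin
  obtain ⟨ε, hε, H⟩ := hmin
  obtain ⟨q, hq1, hq2⟩ := h ε hε
  exact absurd (H hq1) (not_le.mpr hq2)

lemma isLocalMin_quartic {c a b M : ℝ} (hc : 2 < c)
    (ha : a ^ 3 = c * a + b) (hb : b ^ 3 = c * b + a)
    (ha2 : 2 * c - 3 ≤ 3 * a ^ 2 - c) (hb2 : 2 * c - 3 ≤ 3 * b ^ 2 - c)
    (hM : 0 < M) (haM : |a| ≤ M) (hbM : |b| ≤ M) :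
    IsLocalMin (fun p : ℝ × ℝ => (p.1 ^ 4 + p.2 ^ 4) / 4 - c / 2 * (p.1 ^ 2 + p.2 ^ 2)
      - p.1 * p.2) (a, b) := by
  apply isLocalMin_of_ball ((c - 2) / M) (div_pos (by linarith) hM)
  intro q hq
  rw [Prod.dist_eq, Real.dist_eq, Real.dist_eq, max_lt_iff] at hq
  obtain ⟨u, hq1⟩ : ∃ u, q.1 = a + u := ⟨q.1 - a, by ring⟩
  obtain ⟨v, hq2⟩ : ∃ v, q.2 = b + v := ⟨q.2 - b, by ring⟩
  have hub : |u| ≤ (c - 2) / M := by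
    have := le_of_lt hq.1
    rwa [hq1, show a + u - a = u by ring] at this
  have hvb : |v| ≤ (c - 2) / M := by
    have := le_of_lt hq.2
    rwa [hq2, show b + v - b = v by ring] at this
  have hau : -((c - 2) * u ^ 2) ≤ a * u ^ 3 := by
    have h1 : |a * u ^ 3| ≤ (c - 2) * u ^ 2 := by
      rw [abs_mul, abs_pow]
      have : |u| ^ 3 = |u| * u ^ 2 := by rw [pow_succ' |u| 2, sq_abs]
      rw [this, ← mul_assoc]
      have h2 : |a| * |u| ≤ M * ((c - 2) / M) :=
        mul_le_mul haM hub (abs_nonneg _) (le_of_lt hM)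
      rw [mul_div_cancel₀ _ (ne_of_gt hM)] at h2
      exact mul_le_mul_of_nonneg_right h2 (sq_nonneg u)
    linarith [neg_abs_le (a * u ^ 3)]
  have hbv : -((c - 2) * v ^ 2) ≤ b * v ^ 3 := by
    have h1 : |b * v ^ 3| ≤ (c - 2) * v ^ 2 := by
      rw [abs_mul, abs_pow]
      have : |v| ^ 3 = |v| * v ^ 2 := by rw [pow_succ' |v| 2, sq_abs]
      rw [this, ← mul_assoc]
      have h2 : |b| * |v| ≤ M * ((c - 2) / M) :=
        mul_le_mul hbM hvb (abs_nonneg _) (le_of_lt hM)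
      rw [mul_div_cancel₀ _ (ne_of_gt hM)] at h2
      exact mul_le_mul_of_nonneg_right h2 (sq_nonneg v)
    linarith [neg_abs_le (b * v ^ 3)]
  simp only [hq1, hq2]
  have hexp : ((a + u) ^ 4 + (b + v) ^ 4) / 4 - c / 2 * ((a + u) ^ 2 + (b + v) ^ 2)
      - (a + u) * (b + v) - ((a ^ 4 + b ^ 4) / 4 - c / 2 * (a ^ 2 + b ^ 2) - a * b)
      = (3 * a ^ 2 - c) / 2 * u ^ 2 + (3 * b ^ 2 - c) / 2 * v ^ 2 - u * v
        + a * u ^ 3 + b * v ^ 3 + (u ^ 4 + v ^ 4) / 4 := by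
    linear_combination u * ha + v * hb
  have h1 : (2 * c - 3) / 2 * u ^ 2 ≤ (3 * a ^ 2 - c) / 2 * u ^ 2 := by
    nlinarith [sq_nonneg u]
  have h2 : (2 * c - 3) / 2 * v ^ 2 ≤ (3 * b ^ 2 - c) / 2 * v ^ 2 := by
    nlinarith [sq_nonneg v]
  have key : 0 ≤ (3 * a ^ 2 - c) / 2 * u ^ 2 + (3 * b ^ 2 - c) / 2 * v ^ 2 - u * v
      + a * u ^ 3 + b * v ^ 3 + (u ^ 4 + v ^ 4) / 4 := by
    nlinarith [h1, h2, hau, hbv, sq_nonneg (u - v), sq_nonneg (u ^ 2), sq_nonneg (v ^ 2)]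
  linarith [hexp, key]

lemma not_isLocalMin_dir {f : ℝ × ℝ → ℝ} {r : ℝ × ℝ} (w₁ w₂ A B C : ℝ) (hA : A < 0)
    (h : ∀ t : ℝ, f (r.1 + t * w₁, r.2 + t * w₂) = f r + A * t ^ 2 + B * t ^ 3 + C * t ^ 4) :
    ¬ IsLocalMin f r := by
  apply not_isLocalMin_pt
  intro ε hε
  set S : ℝ := |w₁| + |w₂| + 1 with hS
  set K : ℝ := |B| + |C| + 1 with hK
  have hS0 : 0 < S := by positivity
  have hK0 : 0 < K := by positivity
  set t : ℝ := min (ε / S) (min 1 (-A / K)) / 2 with ht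
  have ht0 : 0 < t := by
    apply div_pos _ two_pos
    apply lt_min (div_pos hε hS0) (lt_min one_pos (div_pos (by linarith) hK0))
  have htε : t < ε / S := by
    have h1 : min (ε / S) (min 1 (-A / K)) ≤ ε / S := min_le_left _ _
    have : 0 < ε / S := div_pos hε hS0
    rw [ht]; linarith
  have ht1 : t ≤ 1 := by
    have h1 : min (ε / S) (min 1 (-A / K)) ≤ 1 := le_trans (min_le_right _ _) (min_le_left _ _)
    rw [ht]; linarith
  have htA : t < -A / K := by
    have h1 : min (ε / S) (min 1 (-A / K)) ≤ -A / K :=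
      le_trans (min_le_right _ _) (min_le_right _ _)
    have : 0 < -A / K := div_pos (by linarith) hK0
    rw [ht]; linarith
  refine ⟨(r.1 + t * w₁, r.2 + t * w₂), ?_, ?_⟩
  · rw [Prod.dist_eq, Real.dist_eq, Real.dist_eq]
    have e1 : |r.1 + t * w₁ - r.1| = t * |w₁| := by
      rw [show r.1 + t * w₁ - r.1 = t * w₁ by ring, abs_mul, abs_of_pos ht0]
    have e2 : |r.2 + t * w₂ - r.2| = t * |w₂| := by
      rw [show r.2 + t * w₂ - r.2 = t * w₂ by ring, abs_mul, abs_of_pos ht0]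
    rw [e1, e2]
    have hb : ∀ x : ℝ, 0 ≤ x → x ≤ |w₁| + |w₂| → t * x < ε := by
      intro x hx0 hx
      calc t * x ≤ t * S := by
            apply mul_le_mul_of_nonneg_left _ (le_of_lt ht0)
            rw [hS]; linarith
        _ < (ε / S) * S := mul_lt_mul_of_pos_right htε hS0
        _ = ε := by field_simp
    exact max_lt (hb _ (abs_nonneg _) (by linarith [abs_nonneg w₂]))
      (hb _ (abs_nonneg _) (by linarith [abs_nonneg w₁]))
  · rw [h t]
    have hBt : B * t ≤ |B| * t := mul_le_mul_of_nonneg_right (le_abs_self B) (le_of_lt ht0)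
    have hCt : C * t ^ 2 ≤ |C| * t := by
      calc C * t ^ 2 ≤ |C| * t ^ 2 := mul_le_mul_of_nonneg_right (le_abs_self C) (sq_nonneg t)
        _ ≤ |C| * t := by
            rw [pow_two, ← mul_assoc]
            apply mul_le_mul_of_nonneg_right _ (le_of_lt ht0)
            nlinarith [abs_nonneg C]
    have hKt : K * t < -A := by
      have := mul_lt_mul_of_pos_left htA hK0
      rwa [mul_div_cancel₀ _ (ne_of_gt hK0)] at this
    have hneg : A + B * t + C * t ^ 2 < 0 := by
      have : B * t + C * t ^ 2 ≤ (|B| + |C|) * t := by linarith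
      nlinarith
    nlinarith [sq_nonneg t, mul_pos (mul_pos ht0 ht0) (neg_pos.mpr hneg)]

lemma critical_of_localMin {c : ℝ} {z : ℝ × ℝ}
    (h : IsLocalMin (fun p : ℝ × ℝ => (p.1 ^ 4 + p.2 ^ 4) / 4 - c / 2 * (p.1 ^ 2 + p.2 ^ 2)
      - p.1 * p.2) z) :
    z.1 ^ 3 - c * z.1 - z.2 = 0 ∧ z.2 ^ 3 - c * z.2 - z.1 = 0 := by
  constructor
  · have hg : ContinuousAt (fun t : ℝ => (z.1 + t, z.2)) 0 := by fun_prop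
    have hz : (z.1 + (0:ℝ), z.2) = z := by simp
    have h1 : IsLocalMin ((fun p : ℝ × ℝ => (p.1 ^ 4 + p.2 ^ 4) / 4
        - c / 2 * (p.1 ^ 2 + p.2 ^ 2) - p.1 * p.2) ∘ (fun t : ℝ => (z.1 + t, z.2))) 0 := by
      apply IsLocalMin.comp_continuous _ hg
      rw [hz]; exact h
    have h1' : IsLocalMin (fun t : ℝ => ((z.1 + t) ^ 4 + z.2 ^ 4) / 4
        - c / 2 * ((z.1 + t) ^ 2 + z.2 ^ 2) - (z.1 + t) * z.2) 0 := h1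
    have hid : HasDerivAt (fun t : ℝ => z.1 + t) 1 0 := (hasDerivAt_id 0).const_add z.1
    have hF : HasDerivAt (fun t : ℝ => ((z.1 + t) ^ 4 + z.2 ^ 4) / 4
        - c / 2 * ((z.1 + t) ^ 2 + z.2 ^ 2) - (z.1 + t) * z.2)
        (z.1 ^ 3 - c * z.1 - z.2) 0 := by
      have hA := ((hid.pow 4).add_const (z.2 ^ 4)).div_const 4
      have hB := ((hid.pow 2).add_const (z.2 ^ 2)).const_mul (c / 2)
      have hC := hid.mul_const z.2
      have := (hA.sub hB).sub hC
      refine this.congr_deriv ?_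
      ring
    have := hF.deriv
    rw [h1'.deriv_eq_zero] at this
    linarith
  · have hg : ContinuousAt (fun t : ℝ => (z.1, z.2 + t)) 0 := by fun_prop
    have hz : (z.1, z.2 + (0:ℝ)) = z := by simp
    have h1 : IsLocalMin ((fun p : ℝ × ℝ => (p.1 ^ 4 + p.2 ^ 4) / 4
        - c / 2 * (p.1 ^ 2 + p.2 ^ 2) - p.1 * p.2) ∘ (fun t : ℝ => (z.1, z.2 + t))) 0 := by
      apply IsLocalMin.comp_continuous _ hg
      rw [hz]; exact h
    have h1' : IsLocalMin (fun t : ℝ => (z.1 ^ 4 + (z.2 + t) ^ 4) / 4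
        - c / 2 * (z.1 ^ 2 + (z.2 + t) ^ 2) - z.1 * (z.2 + t)) 0 := h1
    have hid : HasDerivAt (fun t : ℝ => z.2 + t) 1 0 := (hasDerivAt_id 0).const_add z.2
    have hF : HasDerivAt (fun t : ℝ => (z.1 ^ 4 + (z.2 + t) ^ 4) / 4
        - c / 2 * (z.1 ^ 2 + (z.2 + t) ^ 2) - z.1 * (z.2 + t))
        (z.2 ^ 3 - c * z.2 - z.1) 0 := by
      have hA := (((hid.pow 4).const_add (z.1 ^ 4))).div_const 4
      have hB := ((hid.pow 2).const_add (z.1 ^ 2)).const_mul (c / 2)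
      have hC := hid.const_mul z.1
      have := (hA.sub hB).sub hC
      refine this.congr_deriv ?_
      ring
    have := hF.deriv
    rw [h1'.deriv_eq_zero] at this
    linarith

end helpers

/-- For `β > 1` and `α² > β + 2`, the 2D potential
`U(x₁,x₂) = (x₁⁴+x₂⁴)/4 + ((β-α²)/2)(x₁²+x₂²) - x₁x₂` has exactly 9 critical points,
of which exactly the 4 points `(±λ₁,±λ₁)`, `(±λ₂,∓λ₂)` are local minima, where
`λ₁ = √(α²-β+1)` and `λ₂ = √(α²-β-1)`. -/
theorem r2_critical_points_and_minima (α β : ℝ) (hβ : 1 < β) (hα : α ^ 2 > β + 2)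
    (U : ℝ × ℝ → ℝ)
    (hU : U = fun p => (p.1 ^ 4 + p.2 ^ 4) / 4 + (β - α ^ 2) / 2 * (p.1 ^ 2 + p.2 ^ 2)
      - p.1 * p.2)
    (lam₁ lam₂ : ℝ) (h₁ : lam₁ = Real.sqrt (α ^ 2 - β + 1))
    (h₂ : lam₂ = Real.sqrt (α ^ 2 - β - 1)) :
    ({p : ℝ × ℝ | p.1 ^ 3 + (β - α ^ 2) * p.1 - p.2 = 0 ∧
        p.2 ^ 3 + (β - α ^ 2) * p.2 - p.1 = 0}).ncard = 9 ∧
    {p : ℝ × ℝ | IsLocalMin U p} =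
      {(lam₁, lam₁), (-lam₁, -lam₁), (lam₂, -lam₂), (-lam₂, lam₂)} ∧
    ({p : ℝ × ℝ | IsLocalMin U p}).ncard = 4 := by
  obtain ⟨c, hcdef⟩ : ∃ c : ℝ, c = α ^ 2 - β := ⟨_, rfl⟩
  have hc : 2 < c := by rw [hcdef]; linarith
  have hl1sq : lam₁ ^ 2 = c + 1 := by
    rw [h₁, Real.sq_sqrt (by linarith : (0:ℝ) ≤ α ^ 2 - β + 1), hcdef]
  have hl2sq : lam₂ ^ 2 = c - 1 := by
    rw [h₂, Real.sq_sqrt (by linarith : (0:ℝ) ≤ α ^ 2 - β - 1), hcdef]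
  have hl1pos : 0 < lam₁ := by rw [h₁]; exact Real.sqrt_pos.mpr (by linarith)
  have hl2pos : 0 < lam₂ := by rw [h₂]; exact Real.sqrt_pos.mpr (by linarith)
  have hl21 : lam₂ < lam₁ := by nlinarith
  obtain ⟨μ, hμdef⟩ : ∃ μ : ℝ, μ = Real.sqrt (c - 2) := ⟨_, rfl⟩
  obtain ⟨ν, hνdef⟩ : ∃ ν : ℝ, ν = Real.sqrt (c + 2) := ⟨_, rfl⟩
  have hμsq : μ ^ 2 = c - 2 := by rw [hμdef, Real.sq_sqrt (by linarith)]
  have hνsq : ν ^ 2 = c + 2 := by rw [hνdef, Real.sq_sqrt (by linarith)]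
  have hμpos : 0 < μ := by rw [hμdef]; exact Real.sqrt_pos.mpr (by linarith)
  have hνpos : 0 < ν := by rw [hνdef]; exact Real.sqrt_pos.mpr (by linarith)
  obtain ⟨P, hPdef⟩ : ∃ P : ℝ, P = (μ + ν) / 2 := ⟨_, rfl⟩
  obtain ⟨Q, hQdef⟩ : ∃ Q : ℝ, Q = (μ - ν) / 2 := ⟨_, rfl⟩
  have hPQ : P * Q = -1 := by rw [hPdef, hQdef]; linear_combination hμsq / 4 - hνsq / 4
  have hPQs : P ^ 2 + Q ^ 2 = c := by rw [hPdef, hQdef]; linear_combination hμsq / 2 + hνsq / 2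
  have hPsum : P + Q = μ := by rw [hPdef, hQdef]; ring
  have hPpos : 0 < P := by rw [hPdef]; linarith
  have hQneg : Q < 0 := by nlinarith
  have hPQne : Q < P := by rw [hPdef, hQdef]; linarith
  have hP2 : P ^ 2 = μ * P + 1 := by rw [hPdef]; linear_combination hνsq / 4 - hμsq / 4
  have hQ2 : Q ^ 2 = μ * Q + 1 := by rw [hQdef]; linear_combination hνsq / 4 - hμsq / 4
  have hPcrit : P ^ 3 - c * P - Q = 0 := by
    linear_combination (P + μ) * hP2 + P * hμsq - hPsum
  have hQcrit : Q ^ 3 - c * Q - P = 0 := by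
    linear_combination (Q + μ) * hQ2 + Q * hμsq - hPsum
  have hμν : 0 < μ * ν := mul_pos hμpos hνpos
  have hμνsq : (μ * ν) ^ 2 = (c - 2) * (c + 2) := by
    rw [mul_pow, hμsq, hνsq]
  have hP2v : 2 * P ^ 2 = c + μ * ν := by
    rw [hPdef]; linear_combination hμsq / 2 + hνsq / 2
  have hQ2v : 2 * Q ^ 2 = c - μ * ν := by
    rw [hQdef]; linear_combination hμsq / 2 + hνsq / 2
  have hl2P : lam₂ ≠ P := by
    intro h
    have h1 : 2 * lam₂ ^ 2 = c + μ * ν := by rw [h]; exact hP2v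
    have h2 : μ * ν = c - 2 := by rw [hl2sq] at h1; linarith
    rw [h2] at hμνsq
    nlinarith
  have hl2Q : lam₂ ≠ -Q := by
    intro h
    have h1 : 2 * lam₂ ^ 2 = c - μ * ν := by
      have : lam₂ ^ 2 = Q ^ 2 := by rw [h]; ring
      rw [this]; exact hQ2v
    have h2 : μ * ν = 2 - c := by rw [hl2sq] at h1; linarith
    rw [h2] at hμν
    linarith
  -- critical set
  have hset : {p : ℝ × ℝ | p.1 ^ 3 + (β - α ^ 2) * p.1 - p.2 = 0 ∧
        p.2 ^ 3 + (β - α ^ 2) * p.2 - p.1 = 0}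
      = {((0:ℝ), (0:ℝ)), (lam₁, lam₁), (-lam₁, -lam₁), (lam₂, -lam₂), (-lam₂, lam₂),
         (P, Q), (Q, P), (-P, -Q), (-Q, -P)} := by
    ext ⟨x, y⟩
    simp only [Set.mem_setOf_eq, Set.mem_insert_iff, Set.mem_singleton_iff, Prod.mk.injEq]
    constructor
    · rintro ⟨e1, e2⟩
      have e1' : x ^ 3 - c * x - y = 0 := by linear_combination e1 - x * hcdef
      have e2' : y ^ 3 - c * y - x = 0 := by linear_combination e2 - y * hcdef
      have hf1 : (x - y) * (x ^ 2 + x * y + y ^ 2 - (c - 1)) = 0 := by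
        linear_combination e1' - e2'
      have hf2 : (x + y) * (x ^ 2 - x * y + y ^ 2 - (c + 1)) = 0 := by
        linear_combination e1' + e2'
      rcases mul_eq_zero.mp hf1 with hxy | hq1 <;> rcases mul_eq_zero.mp hf2 with hxy2 | hq2
      · exact Or.inl ⟨by linarith, by linarith⟩
      · -- x = y, x² = c + 1
        have hfac : (x - lam₁) * (x + lam₁) = 0 := by
          linear_combination hq2 + y * hxy - hl1sq
        rcases mul_eq_zero.mp hfac with h | h
        · exact Or.inr (Or.inl ⟨by linarith, by linarith⟩)
        · exact Or.inr (Or.inr (Or.inl ⟨by linarith, by linarith⟩))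
      · -- x = -y, x² = c - 1
        have hfac : (x - lam₂) * (x + lam₂) = 0 := by
          linear_combination hq1 - y * hxy2 - hl2sq
        rcases mul_eq_zero.mp hfac with h | h
        · exact Or.inr (Or.inr (Or.inr (Or.inl ⟨by linarith, by linarith⟩)))
        · exact Or.inr (Or.inr (Or.inr (Or.inr (Or.inl ⟨by linarith, by linarith⟩))))
      · -- xy = -1, x²+y² = c
        have hxy : x * y = -1 := by linear_combination hq1 / 2 - hq2 / 2
        have hs2 : x ^ 2 + y ^ 2 = c := by linear_combination hq1 / 2 + hq2 / 2
        have hsum' : (x + y - μ) * (x + y + μ) = 0 := by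
          linear_combination hs2 + 2 * hxy - hμsq
        have hdiff' : (x - y - ν) * (x - y + ν) = 0 := by
          linear_combination hs2 - 2 * hxy - hνsq
        rcases mul_eq_zero.mp hsum' with hs | hs <;> rcases mul_eq_zero.mp hdiff' with hd | hd
        · exact Or.inr (Or.inr (Or.inr (Or.inr (Or.inr (Or.inl
            ⟨by rw [hPdef]; linarith, by rw [hQdef]; linarith⟩)))))
        · exact Or.inr (Or.inr (Or.inr (Or.inr (Or.inr (Or.inr (Or.inl
            ⟨by rw [hQdef]; linarith, by rw [hPdef]; linarith⟩))))))
        · exact Or.inr (Or.inr (Or.inr (Or.inr (Or.inr (Or.inr (Or.inr (Or.inr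
            ⟨by rw [hQdef]; linarith, by rw [hPdef]; linarith⟩)))))))
        · exact Or.inr (Or.inr (Or.inr (Or.inr (Or.inr (Or.inr (Or.inr (Or.inl
            ⟨by rw [hPdef]; linarith, by rw [hQdef]; linarith⟩)))))))
    · rintro (⟨hx, hy⟩ | ⟨hx, hy⟩ | ⟨hx, hy⟩ | ⟨hx, hy⟩ | ⟨hx, hy⟩ | ⟨hx, hy⟩ | ⟨hx, hy⟩ |
        ⟨hx, hy⟩ | ⟨hx, hy⟩) <;> rw [hx, hy]
      · norm_num
      · exact ⟨by linear_combination lam₁ * hl1sq + lam₁ * hcdef,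
          by linear_combination lam₁ * hl1sq + lam₁ * hcdef⟩
      · exact ⟨by linear_combination -lam₁ * hl1sq - lam₁ * hcdef,
          by linear_combination -lam₁ * hl1sq - lam₁ * hcdef⟩
      · exact ⟨by linear_combination lam₂ * hl2sq + lam₂ * hcdef,
          by linear_combination -lam₂ * hl2sq - lam₂ * hcdef⟩
      · exact ⟨by linear_combination -lam₂ * hl2sq - lam₂ * hcdef,
          by linear_combination lam₂ * hl2sq + lam₂ * hcdef⟩
      · exact ⟨by linear_combination hPcrit + P * hcdef, by linear_combination hQcrit + Q * hcdef⟩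
      · exact ⟨by linear_combination hQcrit + Q * hcdef, by linear_combination hPcrit + P * hcdef⟩
      · exact ⟨by linear_combination -hPcrit - P * hcdef, by linear_combination -hQcrit - Q * hcdef⟩
      · exact ⟨by linear_combination -hQcrit - Q * hcdef, by linear_combination -hPcrit - P * hcdef⟩
  have hUc : U = fun p : ℝ × ℝ => (p.1 ^ 4 + p.2 ^ 4) / 4 - c / 2 * (p.1 ^ 2 + p.2 ^ 2)
      - p.1 * p.2 := by
    rw [hU]; funext pp; rw [hcdef]; ring
  obtain ⟨a₁, ha₁⟩ : ∃ a : ℝ, a = 3 * P ^ 2 - c := ⟨_, rfl⟩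
  have ha1pos : 0 < a₁ := by rw [ha₁]; linarith [hP2v, hμν]
  have hc4 : 4 - c ^ 2 < 0 := by
    have h22 : (2:ℝ) * 2 < c * c := by
      apply mul_lt_mul' (le_of_lt hc) hc (by norm_num) (by linarith)
    have hcc : c ^ 2 = c * c := sq c
    linarith
  have hAval : (3 * P ^ 2 - c) / 2 + (3 * Q ^ 2 - c) / 2 * a₁ ^ 2 - a₁
      = a₁ * (4 - c ^ 2) := by
    rw [ha₁]
    linear_combination ((3 * P ^ 2 - c) / 2 * 9 * (P * Q - 1)) * hPQ
      - (3 * c * (3 * P ^ 2 - c) / 2) * hPQs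
  have hAneg : (3 * P ^ 2 - c) / 2 + (3 * Q ^ 2 - c) / 2 * a₁ ^ 2 - a₁ < 0 := by
    rw [hAval]; exact mul_neg_of_pos_of_neg ha1pos hc4
  have hminset : {p : ℝ × ℝ | IsLocalMin U p} =
      {(lam₁, lam₁), (-lam₁, -lam₁), (lam₂, -lam₂), (-lam₂, lam₂)} := by
    ext z
    simp only [Set.mem_setOf_eq, Set.mem_insert_iff, Set.mem_singleton_iff]
    constructor
    · intro hmin
      rw [hUc] at hmin
      obtain ⟨e1, e2⟩ := critical_of_localMin hmin
      have hzmem : z ∈ ({((0:ℝ), (0:ℝ)), (lam₁, lam₁), (-lam₁, -lam₁), (lam₂, -lam₂),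
          (-lam₂, lam₂), (P, Q), (Q, P), (-P, -Q), (-Q, -P)} : Set (ℝ × ℝ)) := by
        rw [← hset]
        exact ⟨by linear_combination e1 + z.1 * hcdef, by linear_combination e2 + z.2 * hcdef⟩
      simp only [Set.mem_insert_iff, Set.mem_singleton_iff] at hzmem
      rcases hzmem with hz | hz | hz | hz | hz | hz | hz | hz | hz
      · exfalso
        rw [hz] at hmin
        refine absurd hmin (not_isLocalMin_dir 1 1 (-(c+1)) 0 (1/2) (by linarith) ?_)
        intro t
        show ((0 + t * 1) ^ 4 + (0 + t * 1) ^ 4) / 4 - c / 2 * ((0 + t * 1) ^ 2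
          + (0 + t * 1) ^ 2) - (0 + t * 1) * (0 + t * 1) = ((0:ℝ) ^ 4 + (0:ℝ) ^ 4) / 4
          - c / 2 * ((0:ℝ) ^ 2 + (0:ℝ) ^ 2) - 0 * 0 + -(c+1) * t ^ 2 + 0 * t ^ 3 + 1/2 * t ^ 4
        ring
      · exact Or.inl hz
      · exact Or.inr (Or.inl hz)
      · exact Or.inr (Or.inr (Or.inl hz))
      · exact Or.inr (Or.inr (Or.inr hz))
      · exfalso
        rw [hz] at hmin
        refine absurd hmin (not_isLocalMin_dir 1 a₁
          ((3 * P ^ 2 - c) / 2 + (3 * Q ^ 2 - c) / 2 * a₁ ^ 2 - a₁)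
          (P + Q * a₁ ^ 3) ((1 + a₁ ^ 4) / 4) hAneg ?_)
        intro t
        show ((P + t * 1) ^ 4 + (Q + t * a₁) ^ 4) / 4 - c / 2 * ((P + t * 1) ^ 2
          + (Q + t * a₁) ^ 2) - (P + t * 1) * (Q + t * a₁) = (P ^ 4 + Q ^ 4) / 4
          - c / 2 * (P ^ 2 + Q ^ 2) - P * Q
          + ((3 * P ^ 2 - c) / 2 + (3 * Q ^ 2 - c) / 2 * a₁ ^ 2 - a₁) * t ^ 2
          + (P + Q * a₁ ^ 3) * t ^ 3 + (1 + a₁ ^ 4) / 4 * t ^ 4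
        linear_combination t * hPcrit + (a₁ * t) * hQcrit
      · exfalso
        rw [hz] at hmin
        refine absurd hmin (not_isLocalMin_dir a₁ 1
          ((3 * P ^ 2 - c) / 2 + (3 * Q ^ 2 - c) / 2 * a₁ ^ 2 - a₁)
          (Q * a₁ ^ 3 + P) ((1 + a₁ ^ 4) / 4) hAneg ?_)
        intro t
        show ((Q + t * a₁) ^ 4 + (P + t * 1) ^ 4) / 4 - c / 2 * ((Q + t * a₁) ^ 2
          + (P + t * 1) ^ 2) - (Q + t * a₁) * (P + t * 1) = (Q ^ 4 + P ^ 4) / 4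
          - c / 2 * (Q ^ 2 + P ^ 2) - Q * P
          + ((3 * P ^ 2 - c) / 2 + (3 * Q ^ 2 - c) / 2 * a₁ ^ 2 - a₁) * t ^ 2
          + (Q * a₁ ^ 3 + P) * t ^ 3 + (1 + a₁ ^ 4) / 4 * t ^ 4
        linear_combination (a₁ * t) * hQcrit + t * hPcrit
      · exfalso
        rw [hz] at hmin
        refine absurd hmin (not_isLocalMin_dir 1 a₁
          ((3 * P ^ 2 - c) / 2 + (3 * Q ^ 2 - c) / 2 * a₁ ^ 2 - a₁)
          (-P - Q * a₁ ^ 3) ((1 + a₁ ^ 4) / 4) hAneg ?_)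
        intro t
        show ((-P + t * 1) ^ 4 + (-Q + t * a₁) ^ 4) / 4 - c / 2 * ((-P + t * 1) ^ 2
          + (-Q + t * a₁) ^ 2) - (-P + t * 1) * (-Q + t * a₁) = ((-P) ^ 4 + (-Q) ^ 4) / 4
          - c / 2 * ((-P) ^ 2 + (-Q) ^ 2) - -P * -Q
          + ((3 * P ^ 2 - c) / 2 + (3 * Q ^ 2 - c) / 2 * a₁ ^ 2 - a₁) * t ^ 2
          + (-P - Q * a₁ ^ 3) * t ^ 3 + (1 + a₁ ^ 4) / 4 * t ^ 4
        linear_combination (-t) * hPcrit + (-(a₁ * t)) * hQcrit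
      · exfalso
        rw [hz] at hmin
        refine absurd hmin (not_isLocalMin_dir a₁ 1
          ((3 * P ^ 2 - c) / 2 + (3 * Q ^ 2 - c) / 2 * a₁ ^ 2 - a₁)
          (-(Q * a₁ ^ 3) - P) ((1 + a₁ ^ 4) / 4) hAneg ?_)
        intro t
        show ((-Q + t * a₁) ^ 4 + (-P + t * 1) ^ 4) / 4 - c / 2 * ((-Q + t * a₁) ^ 2
          + (-P + t * 1) ^ 2) - (-Q + t * a₁) * (-P + t * 1) = ((-Q) ^ 4 + (-P) ^ 4) / 4
          - c / 2 * ((-Q) ^ 2 + (-P) ^ 2) - -Q * -P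
          + ((3 * P ^ 2 - c) / 2 + (3 * Q ^ 2 - c) / 2 * a₁ ^ 2 - a₁) * t ^ 2
          + (-(Q * a₁ ^ 3) - P) * t ^ 3 + (1 + a₁ ^ 4) / 4 * t ^ 4
        linear_combination (-(a₁ * t)) * hQcrit + (-t) * hPcrit
    · rintro (hz | hz | hz | hz) <;> rw [hz, hUc]
      · exact isLocalMin_quartic hc (by linear_combination lam₁ * hl1sq)
          (by linear_combination lam₁ * hl1sq) (by linarith [hl1sq]) (by linarith [hl1sq])
          hl1pos (abs_of_pos hl1pos).le (abs_of_pos hl1pos).le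
      · refine isLocalMin_quartic hc (by linear_combination -lam₁ * hl1sq)
          (by linear_combination -lam₁ * hl1sq) (by rw [neg_sq]; linarith [hl1sq]) (by rw [neg_sq]; linarith [hl1sq])
          hl1pos ?_ ?_ <;> rw [abs_neg, abs_of_pos hl1pos]
      · refine isLocalMin_quartic hc (by linear_combination lam₂ * hl2sq)
          (by linear_combination -lam₂ * hl2sq) (by linarith [hl2sq]) (by rw [neg_sq]; linarith [hl2sq])
          hl1pos ?_ ?_
        · rw [abs_of_pos hl2pos]; linarith
        · rw [abs_neg, abs_of_pos hl2pos]; linarith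
      · refine isLocalMin_quartic hc (by linear_combination -lam₂ * hl2sq)
          (by linear_combination lam₂ * hl2sq) (by rw [neg_sq]; linarith [hl2sq]) (by linarith [hl2sq])
          hl1pos ?_ ?_
        · rw [abs_neg, abs_of_pos hl2pos]; linarith
        · rw [abs_of_pos hl2pos]; linarith
  refine ⟨?_, hminset, ?_⟩
  · rw [hset]
    have hm0 : ((0:ℝ), (0:ℝ)) ∉ ({(lam₁, lam₁), (-lam₁, -lam₁), (lam₂, -lam₂), (-lam₂, lam₂),
        (P, Q), (Q, P), (-P, -Q), (-Q, -P)} : Set (ℝ × ℝ)) := by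
      simp only [Set.mem_insert_iff, Set.mem_singleton_iff, Prod.mk.injEq, not_or]
      refine ⟨?_, ?_, ?_, ?_, ?_, ?_, ?_, ?_⟩ <;> rintro ⟨h1, h2⟩ <;> linarith
    have hm1 : (lam₁, lam₁) ∉ ({(-lam₁, -lam₁), (lam₂, -lam₂), (-lam₂, lam₂),
        (P, Q), (Q, P), (-P, -Q), (-Q, -P)} : Set (ℝ × ℝ)) := by
      simp only [Set.mem_insert_iff, Set.mem_singleton_iff, Prod.mk.injEq, not_or]
      refine ⟨?_, ?_, ?_, ?_, ?_, ?_, ?_⟩ <;> rintro ⟨h1, h2⟩ <;> linarith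
    have hm2 : (-lam₁, -lam₁) ∉ ({(lam₂, -lam₂), (-lam₂, lam₂),
        (P, Q), (Q, P), (-P, -Q), (-Q, -P)} : Set (ℝ × ℝ)) := by
      simp only [Set.mem_insert_iff, Set.mem_singleton_iff, Prod.mk.injEq, not_or]
      refine ⟨?_, ?_, ?_, ?_, ?_, ?_⟩ <;> rintro ⟨h1, h2⟩ <;> linarith
    have hm3 : (lam₂, -lam₂) ∉ ({(-lam₂, lam₂),
        (P, Q), (Q, P), (-P, -Q), (-Q, -P)} : Set (ℝ × ℝ)) := by
      simp only [Set.mem_insert_iff, Set.mem_singleton_iff, Prod.mk.injEq, not_or]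
      refine ⟨?_, ?_, ?_, ?_, ?_⟩ <;> rintro ⟨h1, h2⟩ <;>
        first | linarith | exact hl2P h1 | exact hl2Q h1 | exact hl2P h2 | exact hl2Q h2
    have hm4 : (-lam₂, lam₂) ∉ ({(P, Q), (Q, P), (-P, -Q), (-Q, -P)} : Set (ℝ × ℝ)) := by
      simp only [Set.mem_insert_iff, Set.mem_singleton_iff, Prod.mk.injEq, not_or]
      refine ⟨?_, ?_, ?_, ?_⟩ <;> rintro ⟨h1, h2⟩ <;>
        first | linarith | exact hl2P h1 | exact hl2Q h1 | exact hl2P h2 | exact hl2Q h2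
    have hm5 : (P, Q) ∉ ({(Q, P), (-P, -Q), (-Q, -P)} : Set (ℝ × ℝ)) := by
      simp only [Set.mem_insert_iff, Set.mem_singleton_iff, Prod.mk.injEq, not_or]
      refine ⟨?_, ?_, ?_⟩ <;> rintro ⟨h1, h2⟩ <;> linarith
    have hm6 : (Q, P) ∉ ({(-P, -Q), (-Q, -P)} : Set (ℝ × ℝ)) := by
      simp only [Set.mem_insert_iff, Set.mem_singleton_iff, Prod.mk.injEq, not_or]
      refine ⟨?_, ?_⟩ <;> rintro ⟨h1, h2⟩ <;> linarith
    have hm7 : (-P, -Q) ∉ ({(-Q, -P)} : Set (ℝ × ℝ)) := by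
      simp only [Set.mem_singleton_iff, Prod.mk.injEq, not_and]
      intro h1 h2
      linarith
    rw [Set.ncard_insert_of_notMem hm0 (Set.toFinite _),
        Set.ncard_insert_of_notMem hm1 (Set.toFinite _),
        Set.ncard_insert_of_notMem hm2 (Set.toFinite _),
        Set.ncard_insert_of_notMem hm3 (Set.toFinite _),
        Set.ncard_insert_of_notMem hm4 (Set.toFinite _),
        Set.ncard_insert_of_notMem hm5 (Set.toFinite _),
        Set.ncard_insert_of_notMem hm6 (Set.toFinite _),
        Set.ncard_insert_of_notMem hm7 (Set.toFinite _),
        Set.ncard_singleton]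
  · rw [hminset]
    have hn0 : (lam₁, lam₁) ∉ ({(-lam₁, -lam₁), (lam₂, -lam₂), (-lam₂, lam₂)} : Set (ℝ × ℝ)) := by
      simp only [Set.mem_insert_iff, Set.mem_singleton_iff, Prod.mk.injEq, not_or]
      refine ⟨?_, ?_, ?_⟩ <;> rintro ⟨h1, h2⟩ <;> linarith
    have hn1 : (-lam₁, -lam₁) ∉ ({(lam₂, -lam₂), (-lam₂, lam₂)} : Set (ℝ × ℝ)) := by
      simp only [Set.mem_insert_iff, Set.mem_singleton_iff, Prod.mk.injEq, not_or]
      refine ⟨?_, ?_⟩ <;> rintro ⟨h1, h2⟩ <;> linarith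
    have hn2 : (lam₂, -lam₂) ∉ ({(-lam₂, lam₂)} : Set (ℝ × ℝ)) := by
      simp only [Set.mem_singleton_iff, Prod.mk.injEq, not_and]
      intro h1 h2
      linarith
    rw [Set.ncard_insert_of_notMem hn0 (Set.toFinite _),
        Set.ncard_insert_of_notMem hn1 (Set.toFinite _),
        Set.ncard_insert_of_notMem hn2 (Set.toFinite _),
        Set.ncard_singleton]
end

section
/- Let \beta > 1 and \alpha^2 > \beta - 1, and let \lambda_1 = \sqrt{\alpha^2 - \beta + 1}. Then (\lambda_1, \lambda_1) and (-\lambda_1, -\lambda_1) are global minimum points of U(x_1,x_2) = (x_1^4 + x_2^4)/4 + ((\beta - \alpha^2)/2)(x_1^2 + x_2^2) - x_1 x_2, with minimal value -(\alpha^2-\beta+1)^2/2. -/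
/-- For `β > 1` and `α² > β - 1`, the points `(λ₁,λ₁)` and `(-λ₁,-λ₁)` with
`λ₁ = √(α²-β+1)` are global minimum points of
`U(x₁,x₂) = (x₁⁴+x₂⁴)/4 + ((β-α²)/2)(x₁²+x₂²) - x₁x₂`,
with minimal value `-(α²-β+1)²/2`. -/
theorem r2_global_minima (α β : ℝ) (hβ : 1 < β) (hα : α ^ 2 > β - 1)
    (U : ℝ × ℝ → ℝ)
    (hU : U = fun p => (p.1 ^ 4 + p.2 ^ 4) / 4 + (β - α ^ 2) / 2 * (p.1 ^ 2 + p.2 ^ 2)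
      - p.1 * p.2)
    (lam₁ : ℝ) (h₁ : lam₁ = Real.sqrt (α ^ 2 - β + 1)) :
    U (lam₁, lam₁) = -(α ^ 2 - β + 1) ^ 2 / 2 ∧
    U (-lam₁, -lam₁) = -(α ^ 2 - β + 1) ^ 2 / 2 ∧
    ∀ p : ℝ × ℝ, -(α ^ 2 - β + 1) ^ 2 / 2 ≤ U p := by
  have hc : (0:ℝ) ≤ α ^ 2 - β + 1 := by linarith
  have hsq : lam₁ ^ 2 = α ^ 2 - β + 1 := by
    rw [h₁, Real.sq_sqrt hc]
  subst hU
  refine ⟨by simp only []; nlinarith [hsq], by simp only []; nlinarith [hsq], ?_⟩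
  intro p
  simp only []
  nlinarith [sq_nonneg (p.1 ^ 2 - (α ^ 2 - β + 1)), sq_nonneg (p.2 ^ 2 - (α ^ 2 - β + 1)),
    sq_nonneg (p.1 - p.2)]
end

section
/- Consider the coherent Ising machine potential U_d(c,s) = \sum_j ((c_j^2+s_j^2)^2/4 - (p/2)(c_j^2 - s_j^2) + (1/2)(c_j^2+s_j^2)) - (1/2)c^T \Xi c - (1/2)s^T \Xi s, where \Xi is symmetric with zero diagonal and p exceeds the largest eigenvalue \lambda_\Xi of \Xi. Then every critical point (c,s) of U_d satisfies s = 0. -/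
private lemma cim_aux_deriv (a b p : ℝ) :
    HasDerivAt (fun t : ℝ => (a ^ 2 + (b + t * b) ^ 2) ^ 2 / 4
        - p / 2 * (a ^ 2 - (b + t * b) ^ 2)
        + (1 / 2) * (a ^ 2 + (b + t * b) ^ 2))
      (b ^ 2 * (a ^ 2 + b ^ 2) + p * b ^ 2 + b ^ 2) 0 := by
  have hu : HasDerivAt (fun t : ℝ => b + t * b) b 0 :=
    ((hasDerivAt_id (0 : ℝ)).mul_const b).const_add b |>.congr_deriv (by ring)
  have hu2 : HasDerivAt (fun t : ℝ => (b + t * b) ^ 2) (2 * b ^ 2) 0 := by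
    have := hu.pow 2
    refine this.congr_deriv ?_
    ring
  have hv : HasDerivAt (fun t : ℝ => a ^ 2 + (b + t * b) ^ 2) (2 * b ^ 2) 0 :=
    hu2.const_add _
  have h1 : HasDerivAt (fun t : ℝ => (a ^ 2 + (b + t * b) ^ 2) ^ 2 / 4)
      (2 * (a ^ 2 + b ^ 2) * (2 * b ^ 2) / 4) 0 := by
    have := (hv.pow 2).div_const 4
    refine this.congr_deriv ?_
    simp
  have h2 : HasDerivAt (fun t : ℝ => p / 2 * (a ^ 2 - (b + t * b) ^ 2))
      (p / 2 * (-(2 * b ^ 2))) 0 := by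
    have : HasDerivAt (fun t : ℝ => a ^ 2 - (b + t * b) ^ 2) (-(2 * b ^ 2)) 0 :=
      hu2.const_sub _ |>.congr_deriv rfl
    exact this.const_mul _
  have h3 : HasDerivAt (fun t : ℝ => (1 / 2 : ℝ) * (a ^ 2 + (b + t * b) ^ 2))
      ((1 / 2) * (2 * b ^ 2)) 0 := hv.const_mul _
  have := (h1.fun_sub h2).fun_add h3
  refine this.congr_deriv ?_
  ring

private lemma cim_aux_deriv2 (x y z : ℝ) :
    HasDerivAt (fun t : ℝ => z * (x + t * x) * (y + t * y)) (2 * (z * x * y)) 0 := by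
  have hx : HasDerivAt (fun t : ℝ => z * (x + t * x)) (z * x) 0 :=
    (((hasDerivAt_id (0 : ℝ)).mul_const x).const_add x |>.congr_deriv (by ring)).const_mul z
  have hy : HasDerivAt (fun t : ℝ => y + t * y) y 0 :=
    ((hasDerivAt_id (0 : ℝ)).mul_const y).const_add y |>.congr_deriv (by ring)
  have := hx.mul hy
  refine this.congr_deriv ?_
  simp
  ring

/-- For the CIM potential `U_d(c,s)`, if `p` exceeds the largest eigenvalue `λ_Ξ` of the
symmetric zero-diagonal matrix `Ξ`, then every critical point `(c,s)` of `U_d` has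
`s = 0`. -/
theorem cim_critical_points_s_eq_zero (n : ℕ) (Xi : Matrix (Fin n) (Fin n) ℝ)
    (hXi : Xi.IsSymm) (hXid : ∀ i, Xi i i = 0) (lamXi p : ℝ)
    (hlam : ∀ v : Fin n → ℝ, ∑ i, ∑ j, Xi i j * v i * v j ≤ lamXi * ∑ i, (v i) ^ 2)
    (hp : p > lamXi)
    (Ud : (Fin n → ℝ) × (Fin n → ℝ) → ℝ)
    (hUd : Ud = fun cs =>
      (∑ j, (((cs.1 j) ^ 2 + (cs.2 j) ^ 2) ^ 2 / 4
        - p / 2 * ((cs.1 j) ^ 2 - (cs.2 j) ^ 2)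
        + (1 / 2) * ((cs.1 j) ^ 2 + (cs.2 j) ^ 2)))
      - (1 / 2) * (∑ i, ∑ j, Xi i j * cs.1 i * cs.1 j)
      - (1 / 2) * (∑ i, ∑ j, Xi i j * cs.2 i * cs.2 j)) :
    ∀ cs : (Fin n → ℝ) × (Fin n → ℝ), fderiv ℝ Ud cs = 0 → cs.2 = 0 := by
  intro cs hcrit
  set c := cs.1 with hc
  set s := cs.2 with hs
  -- differentiability
  have hdiff : Differentiable ℝ Ud := by
    subst hUd; fun_prop
  -- the path φ t = (c, s + t • s)
  have hφ1 : HasDerivAt (fun _ : ℝ => c) (0 : Fin n → ℝ) 0 := hasDerivAt_const 0 c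
  have hφ2 : HasDerivAt (fun t : ℝ => s + t • s) s 0 := by
    have := ((hasDerivAt_id (0 : ℝ)).smul_const s).const_add s
    simpa using this
  have hφ : HasDerivAt (fun t : ℝ => ((c, s + t • s) : (Fin n → ℝ) × (Fin n → ℝ)))
      ((0 : Fin n → ℝ), s) 0 := hφ1.prodMk hφ2
  have hφ0 : ((c, s + (0 : ℝ) • s) : (Fin n → ℝ) × (Fin n → ℝ)) = cs := by
    simp [hc, hs]
  -- chain rule: g has derivative 0 at 0
  have hg0 : HasDerivAt (fun t : ℝ => Ud (c, s + t • s)) 0 0 := by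
    have hU : HasFDerivAt Ud (fderiv ℝ Ud cs) ((c, s + (0:ℝ) • s) : (Fin n → ℝ) × (Fin n → ℝ)) := by
      rw [hφ0]; exact (hdiff cs).hasFDerivAt
    have h := hU.comp_hasDerivAt 0 hφ
    rw [hcrit] at h
    simp at h
    exact h
  -- explicit derivative
  set E : ℝ := (∑ j, ((s j) ^ 2 * ((c j) ^ 2 + (s j) ^ 2) + p * (s j) ^ 2 + (s j) ^ 2))
      - ∑ i, ∑ j, Xi i j * s i * s j with hE
  have hg1 : HasDerivAt (fun t : ℝ => Ud (c, s + t • s)) E 0 := by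
    rw [hUd]
    simp only [Pi.add_apply, Pi.smul_apply, smul_eq_mul]
    have hA : HasDerivAt (fun t : ℝ => ∑ j, (((c j) ^ 2 + (s j + t * s j) ^ 2) ^ 2 / 4
        - p / 2 * ((c j) ^ 2 - (s j + t * s j) ^ 2)
        + (1 / 2) * ((c j) ^ 2 + (s j + t * s j) ^ 2)))
        (∑ j, ((s j) ^ 2 * ((c j) ^ 2 + (s j) ^ 2) + p * (s j) ^ 2 + (s j) ^ 2)) 0 :=
      HasDerivAt.fun_sum fun j _ => cim_aux_deriv (c j) (s j) p
    have hB : HasDerivAt (fun _ : ℝ => (1 / 2 : ℝ) * (∑ i, ∑ j, Xi i j * c i * c j)) 0 0 :=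
      hasDerivAt_const 0 _
    have hC : HasDerivAt (fun t : ℝ =>
        (1 / 2 : ℝ) * (∑ i, ∑ j, Xi i j * (s i + t * s i) * (s j + t * s j)))
        (∑ i, ∑ j, Xi i j * s i * s j) 0 := by
      have : HasDerivAt (fun t : ℝ => ∑ i, ∑ j, Xi i j * (s i + t * s i) * (s j + t * s j))
          (∑ i, ∑ j, 2 * (Xi i j * s i * s j)) 0 :=
        HasDerivAt.fun_sum fun i _ => HasDerivAt.fun_sum fun j _ => cim_aux_deriv2 (s i) (s j) (Xi i j)
      have h2 := this.const_mul (1 / 2 : ℝ)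
      refine h2.congr_deriv ?_
      simp only [Finset.mul_sum]
      congr 1; ext i; congr 1; ext j; ring
    have := (hA.fun_sub hB).fun_sub hC
    refine this.congr_deriv ?_
    rw [hE]; ring
  have hEzero : E = 0 := by
    have := hg1.deriv ▸ hg0.deriv
    rw [← hg1.deriv, hg0.deriv]
  -- combine with eigenvalue bound
  have hQ : ∑ i, ∑ j, Xi i j * s i * s j ≤ lamXi * ∑ j, (s j) ^ 2 := hlam s
  have hsum : ∑ j, ((s j) ^ 2 * ((c j) ^ 2 + (s j) ^ 2) + p * (s j) ^ 2 + (s j) ^ 2)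
      = ∑ i, ∑ j, Xi i j * s i * s j := by
    have := hEzero
    rw [hE] at this
    linarith
  have hkey : ∑ j, ((s j) ^ 2 * ((c j) ^ 2 + (s j) ^ 2 + (p - lamXi) + 1)) ≤ 0 := by
    have : ∑ j, ((s j) ^ 2 * ((c j) ^ 2 + (s j) ^ 2 + (p - lamXi) + 1))
        = (∑ j, ((s j) ^ 2 * ((c j) ^ 2 + (s j) ^ 2) + p * (s j) ^ 2 + (s j) ^ 2))
          - lamXi * ∑ j, (s j) ^ 2 := by
      rw [Finset.mul_sum, ← Finset.sum_sub_distrib]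
      congr 1; ext j; ring
    rw [this, hsum]
    linarith
  have hterm : ∀ j ∈ Finset.univ, (0:ℝ) ≤ (s j) ^ 2 * ((c j) ^ 2 + (s j) ^ 2 + (p - lamXi) + 1) := by
    intro j _
    have h1 : (0:ℝ) < (c j) ^ 2 + (s j) ^ 2 + (p - lamXi) + 1 := by
      nlinarith [sq_nonneg (c j), sq_nonneg (s j)]
    exact mul_nonneg (sq_nonneg _) h1.le
  have hall := (Finset.sum_eq_zero_iff_of_nonneg hterm).mp
    (le_antisymm hkey (Finset.sum_nonneg hterm))
  funext j
  have hj := hall j (Finset.mem_univ j)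
  have hpos : (0:ℝ) < (c j) ^ 2 + (s j) ^ 2 + (p - lamXi) + 1 := by
    nlinarith [sq_nonneg (c j), sq_nonneg (s j)]
  have : (s j) ^ 2 = 0 := by
    rcases mul_eq_zero.mp hj with h | h
    · exact h
    · exact absurd h hpos.ne'
  simpa [hs] using pow_eq_zero_iff (n := 2) (by norm_num) |>.mp this
end
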